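/- Let m, n ≥ 1 and consider any outerplanar drawing of the complete multipartite graph K(p^(1), m^(n)). Let v be a vertex of the partite set of size p, and let e be the edge from v to the vertex u of the induced copy of K_{m^(n)} lying k positions counterclockwise from v around the circle (counting only vertices of K_{m^(n)}), where 1 ≤ k ≤ mn. Then the number of edges of the induced K_{m^(n)} that cross e is at least (1/2)m²n(n−1) − m(n−1) − M_L(k) − M_R(k), where M_L(k) is the number of edges of the complete multipartite graph on k−1 vertices with n parts as evenly sized as possible (r = (k−1) − n⌊(k−1)/n⌋ parts of size ⌊(k−1)/n⌋+1 and n−r parts of size ⌊(k−1)/n⌋), and M_R(k) is defined analogously with k−1 replaced by mn−k. -/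

import Mathlib

/-- The complete multipartite graph determined by a part-assignment function:
two vertices are adjacent iff they lie in different parts. -/
def mpGraph {V I : Type*} (part : V → I) : SimpleGraph V where
  Adj u v := part u ≠ part v
  symm := ⟨fun _ _ h => Ne.symm h⟩
  loopless := ⟨fun _ h => h rfl⟩

/-- The complete multipartite graph `K(p^(1), m^(n))`: one partite set of size `p`
(the `Sum.inl` vertices) and `n` partite sets of size `m` (the `Sum.inr` vertices). -/
def K1n (p m n : ℕ) : SimpleGraph (Fin p ⊕ Fin n × Fin m) :=
  mpGraph (Sum.elim (fun _ => (none : Option (Fin n))) (fun x => some x.1))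

/-- In the outerplanar drawing given by the bijection `σ` (vertices placed on a circle
in the order given by `σ`, edges drawn as straight chords), the edges `e` and `f` cross,
with `e` containing the smallest of the four endpoint positions:  there are labellings
`e = {a,b}`, `f = {c,d}` with `σ a < σ c < σ b < σ d`, i.e. the endpoints interleave
(exactly one endpoint of `f` lies strictly between the endpoints of `e` in the cyclic
order).  A pair of edges crosses iff `crosses σ e f ∨ crosses σ f e`. -/
def crosses {V : Type*} {N : ℕ} (σ : V ≃ Fin N) (e f : Sym2 V) : Prop :=
  ∃ a b c d : V, e = s(a, b) ∧ f = s(c, d) ∧ σ a < σ c ∧ σ c < σ b ∧ σ b < σ d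

/-- The number of crossing (unordered) pairs of edges in the outerplanar drawing of `G`
given by the bijection `σ`: each crossing pair `{e, f}` is counted exactly once, via the
unique ordering for which `crosses` holds. -/
noncomputable def numCrossings {V : Type*} {N : ℕ} (σ : V ≃ Fin N) (G : SimpleGraph V) : ℕ :=
  Nat.card {ef : Sym2 V × Sym2 V //
    ef.1 ∈ G.edgeSet ∧ ef.2 ∈ G.edgeSet ∧ crosses σ ef.1 ef.2}

/-- The outerplanar crossing number `ν₁(G)`: the minimum over all outerplanar drawings
(bijections of the vertex set onto `Fin N`, `N` the number of vertices) of the number of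
crossing pairs of edges. -/
noncomputable def nu1 {V : Type*} [Fintype V] (G : SimpleGraph V) : ℕ :=
  ⨅ σ : V ≃ Fin (Fintype.card V), numCrossings σ G

/-- Part sizes of the complete multipartite graph on `N` vertices with `n` parts as
evenly sized as possible: `r = N - n·⌊N/n⌋` parts of size `⌊N/n⌋ + 1` and `n - r`
parts of size `⌊N/n⌋`. -/
def evenParts (n N : ℕ) : Fin n → ℕ :=
  fun i => if (i : ℕ) < N - n * (N / n) then N / n + 1 else N / n

/-- The number of edges of the complete multipartite graph with part sizes `c`,
namely `∑_{i<j} c i * c j`. -/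
def edgesOfParts {n : ℕ} (c : Fin n → ℕ) : ℕ :=
  ∑ ij ∈ Finset.univ.filter (fun ij : Fin n × Fin n => ij.1 < ij.2), c ij.1 * c ij.2

open Finset

lemma two_mul_edgesOfParts {n : ℕ} (d : Fin n → ℕ) :
    2 * edgesOfParts d + ∑ i, d i ^ 2 = (∑ i, d i) ^ 2 := by
  classical
  have h1 : (∑ i, d i) ^ 2 = ∑ ij ∈ (univ : Finset (Fin n × Fin n)), d ij.1 * d ij.2 := by
    rw [sq, Finset.sum_mul_sum, ← Finset.univ_product_univ, Finset.sum_product]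
  have h2 : ∑ ij ∈ (univ : Finset (Fin n × Fin n)), d ij.1 * d ij.2
      = ∑ ij ∈ univ.filter (fun ij : Fin n × Fin n => ij.1 < ij.2), d ij.1 * d ij.2
      + ∑ ij ∈ univ.filter (fun ij : Fin n × Fin n => ¬ ij.1 < ij.2), d ij.1 * d ij.2 :=
    (Finset.sum_filter_add_sum_filter_not _ _ _).symm
  have h3 : ∑ ij ∈ univ.filter (fun ij : Fin n × Fin n => ¬ ij.1 < ij.2), d ij.1 * d ij.2
      = ∑ ij ∈ univ.filter (fun ij : Fin n × Fin n => ij.1 = ij.2), d ij.1 * d ij.2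
      + ∑ ij ∈ univ.filter (fun ij : Fin n × Fin n => ij.2 < ij.1), d ij.1 * d ij.2 := by
    rw [← Finset.sum_filter_add_sum_filter_not (univ.filter (fun ij : Fin n × Fin n => ¬ ij.1 < ij.2))
      (fun ij => ij.1 = ij.2), Finset.filter_filter, Finset.filter_filter]
    congr 1
    · apply Finset.sum_congr _ (fun _ _ => rfl)
      ext ij
      simp only [Finset.mem_filter, Finset.mem_univ, true_and, Fin.lt_def, Fin.ext_iff]
      omega
    · apply Finset.sum_congr _ (fun _ _ => rfl)
      ext ij
      simp only [Finset.mem_filter, Finset.mem_univ, true_and, Fin.lt_def, Fin.ext_iff]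
      omega
  have h4 : ∑ ij ∈ univ.filter (fun ij : Fin n × Fin n => ij.1 = ij.2), d ij.1 * d ij.2
      = ∑ i, d i ^ 2 := by
    rw [Finset.sum_nbij' (i := fun ij => ij.1) (j := fun i => (i, i))] <;> simp +contextual [sq]
  have h5 : ∑ ij ∈ univ.filter (fun ij : Fin n × Fin n => ij.2 < ij.1), d ij.1 * d ij.2
      = edgesOfParts d := by
    unfold edgesOfParts
    rw [Finset.sum_nbij' (i := fun ij : Fin n × Fin n => (ij.2, ij.1))
      (j := fun ij : Fin n × Fin n => (ij.2, ij.1))] <;> simp +contextual [mul_comm]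
  unfold edgesOfParts
  rw [h1, h2, h3, h4, h5]
  unfold edgesOfParts
  ring


lemma sum_ite_lt {M : Type*} [AddCommMonoid M] (n r : ℕ) (X Y : M) (h : r ≤ n) :
    ∑ i : Fin n, (if (i : ℕ) < r then X else Y) = r • X + (n - r) • Y := by
  rw [show (∑ i : Fin n, if (i : ℕ) < r then X else Y)
      = ∑ i ∈ Finset.range n, (if i < r then X else Y) from
    Fin.sum_univ_eq_sum_range (fun j => if j < r then X else Y) n]
  rw [Finset.range_eq_Ico, ← Finset.sum_Ico_consecutive _ (Nat.zero_le r) h]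
  have e1 : ∑ i ∈ Finset.Ico 0 r, (if i < r then X else Y) = r • X := by
    rw [Finset.sum_congr rfl (fun i hi => if_pos (Finset.mem_Ico.mp hi).2),
      Finset.sum_const, Nat.card_Ico, Nat.sub_zero]
  have e2 : ∑ i ∈ Finset.Ico r n, (if i < r then X else Y) = (n - r) • Y := by
    rw [Finset.sum_congr rfl (fun i hi => if_neg (by have := (Finset.mem_Ico.mp hi).1; omega)),
      Finset.sum_const, Nat.card_Ico]
  rw [e1, e2]

lemma evenParts_cond (n N : ℕ) : N - n * (N / n) = N % n := by
  have := Nat.mod_add_div N n; omega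

lemma sum_evenParts (n N : ℕ) (hn : 1 ≤ n) : ∑ i, evenParts n N i = N := by
  unfold evenParts
  rw [show (fun i : Fin n => if (i : ℕ) < N - n * (N / n) then N / n + 1 else N / n)
      = (fun i : Fin n => if (i : ℕ) < N % n then N / n + 1 else N / n) by
    funext i; rw [evenParts_cond]]
  rw [sum_ite_lt n (N % n) _ _ (le_of_lt (Nat.mod_lt N hn))]
  simp only [smul_eq_mul]
  have h1 := Nat.div_add_mod N n
  have h2 : (n - N % n) * (N / n) = n * (N / n) - (N % n) * (N / n) := Nat.sub_mul _ _ _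
  have h3 : (N % n) * (N / n) ≤ n * (N / n) :=
    Nat.mul_le_mul_right _ (le_of_lt (Nat.mod_lt N hn))
  rw [Nat.mul_add] at *
  omega

lemma sum_sq_evenParts (n N : ℕ) (hn : 1 ≤ n) : ∑ i, (evenParts n N i : ℤ) ^ 2
    = n * ((N / n : ℕ) : ℤ) ^ 2 + ((N % n : ℕ) : ℤ) * (2 * ((N / n : ℕ) : ℤ) + 1) := by
  unfold evenParts
  rw [show (fun i : Fin n => ((if (i : ℕ) < N - n * (N / n) then N / n + 1 else N / n : ℕ) : ℤ) ^ 2)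
      = (fun i : Fin n => if (i : ℕ) < N % n then (((N / n : ℕ) : ℤ) + 1) ^ 2 else ((N / n : ℕ) : ℤ) ^ 2) by
    funext i; rw [evenParts_cond]; split <;> push_cast <;> ring]
  rw [sum_ite_lt n (N % n) _ _ (le_of_lt (Nat.mod_lt N hn))]
  have hle : N % n ≤ n := le_of_lt (Nat.mod_lt N hn)
  rw [nsmul_eq_mul, nsmul_eq_mul, Nat.cast_sub hle]
  ring

lemma sum_sq_ge (n N : ℕ) (hn : 1 ≤ n) (c : Fin n → ℕ) (hc : ∑ i, c i = N) :
    ∑ i, (evenParts n N i : ℤ) ^ 2 ≤ ∑ i, (c i : ℤ) ^ 2 := by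
  set q : ℤ := ((N / n : ℕ) : ℤ) with hq
  have key : ∀ i : Fin n, q ^ 2 + (2 * q + 1) * ((c i : ℤ) - q) ≤ (c i : ℤ) ^ 2 := by
    intro i
    have h0 : (0 : ℤ) ≤ ((c i : ℤ) - q) * ((c i : ℤ) - q - 1) := by
      rcases le_or_gt ((c i : ℤ)) q with h | h
      · have := mul_nonneg (show (0:ℤ) ≤ q - (c i : ℤ) by omega)
          (show (0:ℤ) ≤ q + 1 - (c i : ℤ) by omega)
        nlinarith [this]
      · exact mul_nonneg (by omega) (by omega)
    nlinarith [h0]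
  have hsum : ∑ i, (q ^ 2 + (2 * q + 1) * ((c i : ℤ) - q)) ≤ ∑ i, (c i : ℤ) ^ 2 :=
    Finset.sum_le_sum (fun i _ => key i)
  have hlhs : ∑ i, (q ^ 2 + (2 * q + 1) * ((c i : ℤ) - q))
      = n * q ^ 2 + (2 * q + 1) * ((N : ℤ) - n * q) := by
    rw [Finset.sum_add_distrib, Finset.sum_const, ← Finset.mul_sum, Finset.sum_sub_distrib,
      Finset.sum_const, Finset.card_univ, Fintype.card_fin]
    have : ∑ i, ((c i : ℤ)) = (N : ℤ) := by rw [← hc]; push_cast; rfl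
    rw [this, nsmul_eq_mul, nsmul_eq_mul]
  rw [sum_sq_evenParts n N hn]
  rw [hlhs] at hsum
  have hNd : (N : ℤ) = n * q + ((N % n : ℕ) : ℤ) := by
    rw [hq]; exact_mod_cast congrArg (Nat.cast : ℕ → ℤ) (Nat.div_add_mod N n).symm
  nlinarith [hsum]

lemma ext_bound (n N : ℕ) (hn : 1 ≤ n) (c : Fin n → ℕ) (hc : ∑ i, c i = N) :
    (N : ℚ) ^ 2 ≤ 2 * (edgesOfParts (evenParts n N) : ℚ) + ∑ i, (c i : ℚ) ^ 2 := by
  have h1 := two_mul_edgesOfParts (evenParts n N)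
  rw [sum_evenParts n N hn] at h1
  have h1' : (N : ℚ) ^ 2
      = 2 * (edgesOfParts (evenParts n N) : ℚ) + ∑ i, ((evenParts n N i : ℚ)) ^ 2 := by
    exact_mod_cast congrArg (Nat.cast : ℕ → ℚ) h1.symm
  have h2 := sum_sq_ge n N hn c hc
  have h2' : ∑ i, ((evenParts n N i : ℚ)) ^ 2 ≤ ∑ i, ((c i : ℚ)) ^ 2 := by exact_mod_cast h2
  linarith


lemma rho_formula {Nn : ℕ} (a0 x : ℕ) (ha0 : a0 < Nn) (hx : x < Nn) (hne : x ≠ a0) :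
    1 ≤ (x + Nn - a0) % Nn ∧
      (x + Nn - a0) % Nn = (if a0 ≤ x then x - a0 else x + (Nn - a0)) := by
  have h1 : x + Nn - a0 = x + (Nn - a0) := by omega
  rw [h1]
  split
  · next h =>
    have h2 : x + (Nn - a0) = (x - a0) + Nn := by omega
    rw [h2, Nat.add_mod_right, Nat.mod_eq_of_lt (by omega)]
    omega
  · next h =>
    rw [Nat.mod_eq_of_lt (by omega)]
    omega

lemma off_inj (m n p : ℕ) (σ : (Fin p ⊕ Fin n × Fin m) ≃ Fin (p + n * m)) (v : Fin p)
    (w w' : Fin n × Fin m)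
    (h : ((σ (Sum.inr w)).val + (p + n * m) - (σ (Sum.inl v)).val) % (p + n * m)
       = ((σ (Sum.inr w')).val + (p + n * m) - (σ (Sum.inl v)).val) % (p + n * m)) :
    w = w' := by
  have ha0 : (σ (Sum.inl v)).val < p + n * m := (σ (Sum.inl v)).isLt
  have hx : (σ (Sum.inr w)).val < p + n * m := (σ (Sum.inr w)).isLt
  have hx' : (σ (Sum.inr w')).val < p + n * m := (σ (Sum.inr w')).isLt
  have hne : (σ (Sum.inr w)).val ≠ (σ (Sum.inl v)).val := fun hh =>
    by cases σ.injective (Fin.val_injective hh)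
  have hne' : (σ (Sum.inr w')).val ≠ (σ (Sum.inl v)).val := fun hh =>
    by cases σ.injective (Fin.val_injective hh)
  obtain ⟨-, e1⟩ := rho_formula _ _ ha0 hx hne
  obtain ⟨-, e2⟩ := rho_formula _ _ ha0 hx' hne'
  rw [e1, e2] at h
  have hval : (σ (Sum.inr w)).val = (σ (Sum.inr w')).val := by
    split_ifs at h <;> omega
  exact Sum.inr_injective (σ.injective (Fin.val_injective hval))

lemma cross_aux (m n p : ℕ) (σ : (Fin p ⊕ Fin n × Fin m) ≃ Fin (p + n * m)) (v : Fin p)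
    (w1 u w2 : Fin n × Fin m)
    (h1 : ((σ (Sum.inr w1)).val + (p + n * m) - (σ (Sum.inl v)).val) % (p + n * m)
        < ((σ (Sum.inr u)).val + (p + n * m) - (σ (Sum.inl v)).val) % (p + n * m))
    (h2 : ((σ (Sum.inr u)).val + (p + n * m) - (σ (Sum.inl v)).val) % (p + n * m)
        < ((σ (Sum.inr w2)).val + (p + n * m) - (σ (Sum.inl v)).val) % (p + n * m)) :
    crosses σ s(Sum.inl v, Sum.inr u) s(Sum.inr w1, Sum.inr w2)
      ∨ crosses σ s(Sum.inr w1, Sum.inr w2) s(Sum.inl v, Sum.inr u) := by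
  have ha0 : (σ (Sum.inl v)).val < p + n * m := (σ (Sum.inl v)).isLt
  have hxN : ∀ w : Fin n × Fin m, (σ (Sum.inr w)).val < p + n * m :=
    fun w => (σ (Sum.inr w)).isLt
  have hne : ∀ w : Fin n × Fin m, (σ (Sum.inr w)).val ≠ (σ (Sum.inl v)).val := fun w hh =>
    by cases σ.injective (Fin.val_injective hh)
  obtain ⟨hp1, e1⟩ := rho_formula _ _ ha0 (hxN w1) (hne w1)
  obtain ⟨-, eu⟩ := rho_formula _ _ ha0 (hxN u) (hne u)
  obtain ⟨-, e2⟩ := rho_formula _ _ ha0 (hxN w2) (hne w2)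
  rw [e1, eu] at h1
  rw [eu, e2] at h2
  rw [e1] at hp1
  have hlt : ∀ x y : Fin p ⊕ Fin n × Fin m, (σ x).val < (σ y).val → σ x < σ y :=
    fun x y h => by rwa [Fin.lt_def]
  split_ifs at h1 h2 hp1 with c1 cu c2
  · -- a0 ≤ x1, a0 ≤ xu, a0 ≤ x2
    exact Or.inl ⟨Sum.inl v, Sum.inr u, Sum.inr w1, Sum.inr w2, rfl, rfl,
      hlt _ _ (by omega), hlt _ _ (by omega), hlt _ _ (by omega)⟩
  · -- a0 ≤ x1, a0 ≤ xu, ¬ a0 ≤ x2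
    exact Or.inr ⟨Sum.inr w2, Sum.inr w1, Sum.inl v, Sum.inr u, Sym2.eq_swap, rfl,
      hlt _ _ (by omega), hlt _ _ (by omega), hlt _ _ (by omega)⟩
  · -- a0 ≤ x1, ¬ a0 ≤ xu, a0 ≤ x2  : impossible
    exact absurd h2 (by omega)
  · -- a0 ≤ x1, ¬ a0 ≤ xu, ¬ a0 ≤ x2
    exact Or.inl ⟨Sum.inr u, Sum.inl v, Sum.inr w2, Sum.inr w1, Sym2.eq_swap, Sym2.eq_swap,
      hlt _ _ (by omega), hlt _ _ (by omega), hlt _ _ (by omega)⟩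
  · -- ¬ a0 ≤ x1, a0 ≤ xu, a0 ≤ x2 : impossible
    exact absurd h1 (by omega)
  · exact absurd h1 (by omega)
  · -- ¬ a0 ≤ x1, ¬ a0 ≤ xu, a0 ≤ x2 : impossible
    exact absurd h2 (by omega)
  · -- all < a0
    exact Or.inr ⟨Sum.inr w1, Sum.inr w2, Sum.inr u, Sum.inl v, rfl, Sym2.eq_swap,
      hlt _ _ (by omega), hlt _ _ (by omega), hlt _ _ (by omega)⟩

lemma main_aux (m n p k : ℕ) (hm : 1 ≤ m) (hn : 1 ≤ n) (hk : 1 ≤ k) (hk' : k ≤ m * n)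
    (σ : (Fin p ⊕ Fin n × Fin m) ≃ Fin (p + n * m)) (v : Fin p) (u : Fin n × Fin m)
    (off : Fin n × Fin m → ℕ)
    (hinj : ∀ w w', off w = off w' → w = w')
    (hcross : ∀ w1 w2 : Fin n × Fin m, off w1 < off u → off u < off w2 →
      crosses σ s(Sum.inl v, Sum.inr u) s(Sum.inr w1, Sum.inr w2)
        ∨ crosses σ s(Sum.inr w1, Sum.inr w2) s(Sum.inl v, Sum.inr u))
    (hu : (Finset.univ.filter (fun w => off w ≤ off u)).card = k) :
    (1/2) * (m : ℚ)^2 * n * ((n : ℚ) - 1) - (m : ℚ) * ((n : ℚ) - 1)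
        - (edgesOfParts (evenParts n (k - 1)) : ℚ)
        - (edgesOfParts (evenParts n (m * n - k)) : ℚ)
      ≤ (Nat.card {f : Sym2 (Fin p ⊕ Fin n × Fin m) //
          f ∈ (K1n p m n).edgeSet ∧ (∀ x ∈ f, x.isRight) ∧
          (crosses σ s(Sum.inl v, Sum.inr u) f ∨ crosses σ f s(Sum.inl v, Sum.inr u))} : ℚ) := by
  classical
  set L := univ.filter (fun w : Fin n × Fin m => off w < off u) with hLdef
  set R := univ.filter (fun w : Fin n × Fin m => off u < off w) with hRdef
  have huL : u ∉ L := by simp [hLdef]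
  have hLcard : L.card = k - 1 := by
    have hins : univ.filter (fun w : Fin n × Fin m => off w ≤ off u) = insert u L := by
      ext w
      simp only [hLdef, Finset.mem_filter, Finset.mem_univ, true_and, Finset.mem_insert]
      constructor
      · intro h
        rcases lt_or_eq_of_le h with h' | h'
        · exact Or.inr h'
        · exact Or.inl (hinj _ _ h')
      · rintro (rfl | h)
        · exact le_refl _
        · exact le_of_lt h
    rw [hins, Finset.card_insert_of_notMem huL] at hu
    omega
  have hRcard : R.card = m * n - k := by
    have hR2 : R = univ.filter (fun w : Fin n × Fin m => ¬ off w ≤ off u) := by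
      ext w
      simp only [hRdef, Finset.mem_filter, Finset.mem_univ, true_and]
      omega
    have htot := Finset.card_filter_add_card_filter_not
      (s := (univ : Finset (Fin n × Fin m))) (p := fun w => off w ≤ off u)
    have hcu : (univ : Finset (Fin n × Fin m)).card = m * n := by
      simp [Finset.card_univ, mul_comm]
    rw [hR2]
    omega
  -- fiber counts
  set a : Fin n → ℕ := fun i => (L.filter (fun w => w.1 = i)).card with hadef
  set b : Fin n → ℕ := fun i => (R.filter (fun w => w.1 = i)).card with hbdef
  have hsum_a : ∑ i, a i = L.card :=
    (Finset.card_eq_sum_card_fiberwise (f := fun w : Fin n × Fin m => w.1)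
      (t := univ) (fun w _ => Finset.mem_univ w.1)).symm
  have hsum_b : ∑ i, b i = R.card :=
    (Finset.card_eq_sum_card_fiberwise (f := fun w : Fin n × Fin m => w.1)
      (t := univ) (fun w _ => Finset.mem_univ w.1)).symm
  have hdisjLR : Disjoint L R := by
    rw [Finset.disjoint_left]
    intro w hw hw'
    simp only [hLdef, hRdef, Finset.mem_filter, Finset.mem_univ, true_and] at hw hw'
    omega
  have huR : u ∉ R := by simp [hRdef]
  have hpart : ∀ w : Fin n × Fin m, w ∈ L ∨ w ∈ R ∨ w = u := by
    intro w
    rcases lt_trichotomy (off w) (off u) with h | h | h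
    · exact Or.inl (by simp [hLdef, h])
    · exact Or.inr (Or.inr (hinj _ _ h))
    · exact Or.inr (Or.inl (by simp [hRdef, h]))
  have hfib : ∀ i : Fin n, a i + b i + (if u.1 = i then 1 else 0) = m := by
    intro i
    have hsplit : univ.filter (fun w : Fin n × Fin m => w.1 = i)
        = ((L.filter (fun w => w.1 = i)) ∪ (R.filter (fun w => w.1 = i)))
          ∪ (({u} : Finset (Fin n × Fin m)).filter (fun w => w.1 = i)) := by
      ext w
      simp only [Finset.mem_filter, Finset.mem_univ, true_and, Finset.mem_union,
        Finset.mem_singleton]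
      constructor
      · intro hw
        rcases hpart w with h | h | h
        · exact Or.inl (Or.inl ⟨h, hw⟩)
        · exact Or.inl (Or.inr ⟨h, hw⟩)
        · exact Or.inr ⟨h, hw⟩
      · rintro ((⟨-, h⟩ | ⟨-, h⟩) | ⟨-, h⟩) <;> exact h
    have hd1 : Disjoint (L.filter (fun w => w.1 = i)) (R.filter (fun w => w.1 = i)) :=
      Finset.disjoint_filter_filter hdisjLR
    have hd2 : Disjoint ((L.filter (fun w => w.1 = i)) ∪ (R.filter (fun w => w.1 = i)))
        (({u} : Finset (Fin n × Fin m)).filter (fun w => w.1 = i)) := by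
      rw [Finset.disjoint_right]
      intro w hw hw'
      rw [Finset.mem_filter, Finset.mem_singleton] at hw
      rcases hw with ⟨rfl, -⟩
      rcases Finset.mem_union.mp hw' with h | h
      · exact huL (Finset.mem_of_mem_filter _ h)
      · exact huR (Finset.mem_of_mem_filter _ h)
    have hcardm : (univ.filter (fun w : Fin n × Fin m => w.1 = i)).card = m := by
      have : univ.filter (fun w : Fin n × Fin m => w.1 = i) = {i} ×ˢ univ := by
        ext w
        rw [Finset.mem_filter, Finset.mem_product, Finset.mem_singleton]
        simp
      rw [this, Finset.card_product]
      simp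
    rw [hsplit, Finset.card_union_of_disjoint hd2, Finset.card_union_of_disjoint hd1,
      Finset.filter_singleton] at hcardm
    simp only [hadef, hbdef]
    rcases eq_or_ne u.1 i with h | h
    · rw [if_pos h] at hcardm
      rw [if_pos h]
      simp only [Finset.card_singleton] at hcardm
      omega
    · rw [if_neg h] at hcardm
      rw [if_neg h]
      simp only [Finset.card_empty] at hcardm
      omega
  -- pair sets
  set Q := (L ×ˢ R).filter (fun pr : (Fin n × Fin m) × (Fin n × Fin m) => pr.1.1 = pr.2.1)
    with hQdef
  set P := (L ×ˢ R).filter (fun pr : (Fin n × Fin m) × (Fin n × Fin m) => ¬ pr.1.1 = pr.2.1)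
    with hPdef
  have hPQ : Q.card + P.card = L.card * R.card := by
    rw [hQdef, hPdef, Finset.card_filter_add_card_filter_not, Finset.card_product]
  have hQcard : Q.card = ∑ i, a i * b i := by
    rw [Finset.card_eq_sum_card_fiberwise
      (f := fun pr : (Fin n × Fin m) × (Fin n × Fin m) => pr.1.1)
      (t := univ) (fun pr _ => Finset.mem_univ _)]
    apply Finset.sum_congr rfl
    intro i _
    have : Q.filter (fun pr => pr.1.1 = i)
        = (L.filter (fun w => w.1 = i)) ×ˢ (R.filter (fun w => w.1 = i)) := by
      ext pr
      simp only [hQdef, Finset.mem_filter, Finset.mem_product]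
      constructor
      · rintro ⟨⟨⟨hL1, hR1⟩, heq⟩, hi⟩
        exact ⟨⟨hL1, hi⟩, hR1, heq ▸ hi⟩
      · rintro ⟨⟨hL1, hi⟩, hR1, hi2⟩
        exact ⟨⟨⟨hL1, hR1⟩, hi.trans hi2.symm⟩, hi⟩
    rw [this, Finset.card_product]
  -- injection into crossing edges
  set g : (Fin n × Fin m) × (Fin n × Fin m) → Sym2 (Fin p ⊕ Fin n × Fin m) :=
    fun pr => s(Sum.inr pr.1, Sum.inr pr.2) with hgdef
  have hmemP : ∀ pr : (Fin n × Fin m) × (Fin n × Fin m), pr ∈ P →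
      pr.1 ∈ L ∧ pr.2 ∈ R ∧ pr.1.1 ≠ pr.2.1 := by
    intro pr hpr
    rw [hPdef, Finset.mem_filter, Finset.mem_product] at hpr
    exact ⟨hpr.1.1, hpr.1.2, hpr.2⟩
  have hoffL : ∀ w ∈ L, off w < off u := by
    intro w hw; simpa [hLdef] using hw
  have hoffR : ∀ w ∈ R, off u < off w := by
    intro w hw; simpa [hRdef] using hw
  have hginj : Set.InjOn g P := by
    intro pr hpr pr' hpr' heq
    simp only [hgdef, Sym2.eq_iff] at heq
    rcases heq with ⟨h1, h2⟩ | ⟨h1, h2⟩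
    · exact Prod.ext (Sum.inr_injective h1) (Sum.inr_injective h2)
    · exfalso
      obtain ⟨hL1, -, -⟩ := hmemP pr hpr
      obtain ⟨-, hR2, -⟩ := hmemP pr' hpr'
      have e1 := hoffL _ hL1
      have e2 := hoffR _ hR2
      rw [← Sum.inr_injective h1] at e2
      omega
  have hsub : P.image g ⊆ univ.filter (fun f : Sym2 (Fin p ⊕ Fin n × Fin m) =>
      f ∈ (K1n p m n).edgeSet ∧ (∀ x ∈ f, x.isRight) ∧
      (crosses σ s(Sum.inl v, Sum.inr u) f ∨ crosses σ f s(Sum.inl v, Sum.inr u))) := by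
    intro f hf
    rcases Finset.mem_image.mp hf with ⟨pr, hpr, rfl⟩
    obtain ⟨hL1, hR1, hne⟩ := hmemP pr hpr
    rw [Finset.mem_filter]
    refine ⟨Finset.mem_univ _, ?_, ?_, ?_⟩
    · rw [hgdef]
      rw [SimpleGraph.mem_edgeSet]
      simp only [K1n, mpGraph]
      simpa using hne
    · intro x hx
      rw [hgdef] at hx
      rcases Sym2.mem_iff.mp hx with rfl | rfl <;> rfl
    · exact hcross pr.1 pr.2 (hoffL _ hL1) (hoffR _ hR1)
  have hcount : P.card ≤ Nat.card {f : Sym2 (Fin p ⊕ Fin n × Fin m) //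
      f ∈ (K1n p m n).edgeSet ∧ (∀ x ∈ f, x.isRight) ∧
      (crosses σ s(Sum.inl v, Sum.inr u) f ∨ crosses σ f s(Sum.inl v, Sum.inr u))} := by
    rw [Nat.card_eq_fintype_card, Fintype.card_subtype]
    calc P.card = (P.image g).card := (Finset.card_image_of_injOn hginj).symm
      _ ≤ _ := Finset.card_le_card hsub
  -- final arithmetic
  have hA := ext_bound n (k - 1) hn a (hsum_a.trans hLcard)
  have hB := ext_bound n (m * n - k) hn b (hsum_b.trans hRcard)
  have hmn1 : 1 ≤ m * n := le_trans hk hk'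
  have hAq : ((k - 1 : ℕ) : ℚ) = (k : ℚ) - 1 := by
    rw [Nat.cast_sub hk]; norm_num
  have hBq : ((m * n - k : ℕ) : ℚ) = (m : ℚ) * n - k := by
    rw [Nat.cast_sub hk']; push_cast; ring
  rw [hAq] at hA
  rw [hBq] at hB
  have hfibq : ∀ i : Fin n, (a i : ℚ) + b i = (m : ℚ) - (if u.1 = i then 1 else 0) := by
    intro i
    have := hfib i
    rcases eq_or_ne u.1 i with h | h
    · rw [if_pos h] at this ⊢
      have : a i + b i + 1 = m := this
      have := congrArg (Nat.cast : ℕ → ℚ) this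
      push_cast at this
      linarith
    · rw [if_neg h] at this ⊢
      have : a i + b i = m := by omega
      have := congrArg (Nat.cast : ℕ → ℚ) this
      push_cast at this
      linarith
  have hsumsq : ∑ i, ((a i : ℚ) + b i) ^ 2 = (n : ℚ) * m ^ 2 - (2 * m - 1) := by
    have e1 : ∀ i : Fin n, ((a i : ℚ) + b i) ^ 2
        = (m : ℚ) ^ 2 - (if u.1 = i then (2 * (m : ℚ) - 1) else 0) := by
      intro i
      rw [hfibq i]
      rcases eq_or_ne u.1 i with h | h
      · rw [if_pos h, if_pos h]; ring
      · rw [if_neg h, if_neg h]; ring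
    rw [Finset.sum_congr rfl (fun i _ => e1 i), Finset.sum_sub_distrib, Finset.sum_const,
      Finset.sum_ite_eq, if_pos (Finset.mem_univ _), Finset.card_univ, Fintype.card_fin,
      nsmul_eq_mul]
  have hexpand : ∑ i, ((a i : ℚ) + b i) ^ 2
      = ∑ i, (a i : ℚ) ^ 2 + 2 * (∑ i, (a i : ℚ) * (b i : ℚ)) + ∑ i, (b i : ℚ) ^ 2 := by
    rw [Finset.mul_sum, ← Finset.sum_add_distrib, ← Finset.sum_add_distrib]
    exact Finset.sum_congr rfl (fun i _ => by ring)
  have hQq : (Q.card : ℚ) = ∑ i, (a i : ℚ) * (b i : ℚ) := by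
    rw [hQcard]; push_cast; rfl
  have hPQq : (Q.card : ℚ) + (P.card : ℚ) = ((k : ℚ) - 1) * ((m : ℚ) * n - k) := by
    have hc := congrArg (Nat.cast : ℕ → ℚ) hPQ
    rw [hLcard, hRcard] at hc
    push_cast [Nat.cast_sub hk, Nat.cast_sub hk'] at hc
    linarith [hc]
  have hfinal : (1/2) * (m : ℚ)^2 * n * ((n : ℚ) - 1) - (m : ℚ) * ((n : ℚ) - 1)
        - (edgesOfParts (evenParts n (k - 1)) : ℚ)
        - (edgesOfParts (evenParts n (m * n - k)) : ℚ) ≤ (P.card : ℚ) := by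
    rw [hexpand] at hsumsq
    rw [hQq] at hPQq
    nlinarith [hA, hB, hsumsq, hPQq]
  calc _ ≤ (P.card : ℚ) := hfinal
    _ ≤ _ := by exact_mod_cast hcount

/-- In any outerplanar drawing `σ` of `K(p^(1), m^(n))` (`m, n ≥ 1`), let `v` be a vertex
of the partite set of size `p` and let `u` be the vertex of the induced copy of `K_{m^(n)}`
lying `k` positions counterclockwise around the circle from `v`, counting only vertices of
`K_{m^(n)}` (`1 ≤ k ≤ mn`); this is expressed by the hypothesis `hu`, which says that
exactly `k` vertices `w` of `K_{m^(n)}` have counterclockwise offset from `v` at most that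
of `u`.  Then the number of edges of the induced `K_{m^(n)}` crossing the edge `e = vu` is
at least `(1/2)m²n(n-1) - m(n-1) - M_L(k) - M_R(k)`, where `M_L(k)` (resp. `M_R(k)`) is the
number of edges of the complete multipartite graph on `k-1` (resp. `mn-k`) vertices with
`n` parts as evenly sized as possible. -/
theorem edge_crossing_lower_bound (m n p k : ℕ) (hm : 1 ≤ m) (hn : 1 ≤ n)
    (hk : 1 ≤ k) (hk' : k ≤ m * n)
    (σ : (Fin p ⊕ Fin n × Fin m) ≃ Fin (p + n * m)) (v : Fin p) (u : Fin n × Fin m)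
    (hu : Nat.card {w : Fin n × Fin m //
        ((σ (Sum.inr w)).val + (p + n * m) - (σ (Sum.inl v)).val) % (p + n * m)
          ≤ ((σ (Sum.inr u)).val + (p + n * m) - (σ (Sum.inl v)).val) % (p + n * m)} = k) :
    (1/2) * (m : ℚ)^2 * n * ((n : ℚ) - 1) - (m : ℚ) * ((n : ℚ) - 1)
        - (edgesOfParts (evenParts n (k - 1)) : ℚ)
        - (edgesOfParts (evenParts n (m * n - k)) : ℚ)
      ≤ (Nat.card {f : Sym2 (Fin p ⊕ Fin n × Fin m) //
          f ∈ (K1n p m n).edgeSet ∧ (∀ x ∈ f, x.isRight) ∧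
          (crosses σ s(Sum.inl v, Sum.inr u) f ∨ crosses σ f s(Sum.inl v, Sum.inr u))} : ℚ) := by
  have hu' : (Finset.univ.filter (fun w : Fin n × Fin m =>
      ((σ (Sum.inr w)).val + (p + n * m) - (σ (Sum.inl v)).val) % (p + n * m)
        ≤ ((σ (Sum.inr u)).val + (p + n * m) - (σ (Sum.inl v)).val) % (p + n * m))).card = k := by
    rw [← hu, Nat.card_eq_fintype_card]
    exact (Fintype.card_subtype _).symm
  exact main_aux m n p k hm hn hk hk' σ v u
    (fun w => ((σ (Sum.inr w)).val + (p + n * m) - (σ (Sum.inl v)).val) % (p + n * m))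
    (fun w w' h => off_inj m n p σ v w w' h)
    (fun w1 w2 h1 h2 => cross_aux m n p σ v w1 u w2 h1 h2)
    hu'
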